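/- Let $N \ge 2$ and consider the field $K_N = \mathbb{C}(\alpha_i, f_i, \tau_i : i \in \mathbb{Z}/N\mathbb{Z})$ with automorphisms $\bar{s}_i$ ($i \in \mathbb{Z}/N\mathbb{Z}$) defined by the same formulas as $s_i$ with indices read modulo $N$: $\bar{s}_i(\alpha_i)=-\alpha_i$, $\bar{s}_i(\alpha_{i\pm1})=\alpha_{i\pm1}+\alpha_i$, $\bar{s}_i(f_{i\pm1})=f_{i\pm1}\pm\alpha_i/f_i$, $\bar{s}_i(\tau_i)=f_i\tau_{i-1}\tau_{i+1}/\tau_i$, other generators fixed. Then for $N \ge 3$ the $\bar{s}_i$ satisfy the affine $A^{(1)}_{N-1}$ Coxeter relations: $\bar{s}_i^2 = \mathrm{id}$, $(\bar{s}_i \bar{s}_{i+1})^3 = \mathrm{id}$, and $\bar{s}_i \bar{s}_j = \bar{s}_j \bar{s}_i$ when $j \not\equiv i \pm 1 \pmod N$. -/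

import Mathlib

set_option maxHeartbeats 4000000 in
/-- The `N`-reduced representation (Remark 1): on a field `K` generated by the variables
`αᵢ, fᵢ, τᵢ` with `i ∈ ℤ/Nℤ`, the automorphisms `s̄ᵢ` defined by the same formulas as `sᵢ`
with indices read modulo `N` satisfy, for `N ≥ 3`, the Coxeter relations of the affine Weyl
group of type `A⁽¹⁾_{N-1}`: `s̄ᵢ² = 1`, `(s̄ᵢ s̄ᵢ₊₁)³ = 1`, and `s̄ᵢ s̄ⱼ = s̄ⱼ s̄ᵢ` whenever
`j ≢ i ± 1 (mod N)`. -/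
theorem stmt_19 {K : Type*} [Field K] (N : ℕ) (hN : 3 ≤ N)
    (α f τ : ZMod N → K)
    (hf : ∀ i, f i ≠ 0) (hτ : ∀ i, τ i ≠ 0)
    (hgen : Subfield.closure (Set.range α ∪ Set.range f ∪ Set.range τ) = ⊤)
    (s : ZMod N → RingAut K)
    (hα1 : ∀ i, s i (α i) = -α i)
    (hα2 : ∀ i, s i (α (i + 1)) = α (i + 1) + α i)
    (hα3 : ∀ i, s i (α (i - 1)) = α (i - 1) + α i)
    (hα4 : ∀ i j, j ≠ i → j ≠ i + 1 → j ≠ i - 1 → s i (α j) = α j)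
    (hf1 : ∀ i, s i (f i) = f i)
    (hf2 : ∀ i, s i (f (i + 1)) = f (i + 1) + α i / f i)
    (hf3 : ∀ i, s i (f (i - 1)) = f (i - 1) - α i / f i)
    (hf4 : ∀ i j, j ≠ i → j ≠ i + 1 → j ≠ i - 1 → s i (f j) = f j)
    (hτ1 : ∀ i, s i (τ i) = f i * τ (i - 1) * τ (i + 1) / τ i)
    (hτ2 : ∀ i j, j ≠ i → s i (τ j) = τ j) :
    (∀ i, s i * s i = 1) ∧
    (∀ i, (s i * s (i + 1)) ^ 3 = 1) ∧
    (∀ i j, j ≠ i + 1 → j ≠ i - 1 → s i * s j = s j * s i) := by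
  have hNN : NeZero N := ⟨by omega⟩
  -- basic constants in ZMod N
  have h1 : (1 : ZMod N) ≠ 0 := by
    intro h
    have hd : (N:ℕ) ∣ 1 := (ZMod.natCast_eq_zero_iff 1 N).mp (by push_cast; exact h)
    have := Nat.le_of_dvd one_pos hd; omega
  have h2 : (2 : ZMod N) ≠ 0 := by
    intro h
    have hd : (N:ℕ) ∣ 2 := (ZMod.natCast_eq_zero_iff 2 N).mp (by push_cast; exact h)
    have := Nat.le_of_dvd two_pos hd; omega
  -- generic index inequalities
  have nip : ∀ i : ZMod N, i + 1 ≠ i := by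
    intro i h; exact h1 (by linear_combination h)
  have nim : ∀ i : ZMod N, i - 1 ≠ i := by
    intro i h; exact h1 (by linear_combination -h)
  have nmp : ∀ i : ZMod N, i - 1 ≠ i + 1 := by
    intro i h; exact h2 (by linear_combination -h)
  have npm : ∀ i : ZMod N, i + 1 ≠ i - 1 := fun i h => nmp i h.symm
  have ncc : ∀ i : ZMod N, i + 1 + 1 ≠ i := by
    intro i h; exact h2 (by linear_combination h)
  have mulapp : ∀ (g h : RingAut K) (x : K), (g * h) x = g (h x) := fun _ _ _ => rfl
  have oneapp : ∀ x : K, (1 : RingAut K) x = x := fun _ => rfl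
  have mapne : ∀ (g : RingAut K) {x : K}, x ≠ 0 → g x ≠ 0 :=
    fun g x hx h => hx (g.injective (by rw [h, map_zero]))
  -- extension lemma
  have ext : ∀ g h : RingAut K, (∀ k, g (α k) = h (α k)) → (∀ k, g (f k) = h (f k)) →
      (∀ k, g (τ k) = h (τ k)) → g = h := by
    intro g h hA hF hT
    have : (g : K →+* K) = (h : K →+* K) := by
      apply RingHom.eq_of_eqOn_of_field_closure_eq_top hgen
      rintro x ((⟨k, rfl⟩ | ⟨k, rfl⟩) | ⟨k, rfl⟩)
      · exact hA k
      · exact hF k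
      · exact hT k
    exact RingEquiv.ext fun x => RingHom.congr_fun this x
  -- Part 1: involutions
  have inv : ∀ i, s i * s i = 1 := by
    intro i
    apply ext
    · intro k
      rcases eq_or_ne k i with h | hki
      · rw [h, mulapp, oneapp, hα1, map_neg, hα1, neg_neg]
      rcases eq_or_ne k (i+1) with h | hkp
      · rw [h, mulapp, oneapp, hα2, map_add, hα2, hα1]; ring
      rcases eq_or_ne k (i-1) with h | hkm
      · rw [h, mulapp, oneapp, hα3, map_add, hα3, hα1]; ring
      · rw [mulapp, oneapp, hα4 i k hki hkp hkm, hα4 i k hki hkp hkm]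
    · intro k
      rcases eq_or_ne k i with h | hki
      · rw [h, mulapp, oneapp, hf1, hf1]
      rcases eq_or_ne k (i+1) with h | hkp
      · rw [h, mulapp, oneapp, hf2, map_add, map_div₀, hα1, hf1, hf2]; ring
      rcases eq_or_ne k (i-1) with h | hkm
      · rw [h, mulapp, oneapp, hf3, map_sub, map_div₀, hα1, hf1, hf3]; ring
      · rw [mulapp, oneapp, hf4 i k hki hkp hkm, hf4 i k hki hkp hkm]
    · intro k
      rcases eq_or_ne k i with h | hki
      · rw [h, mulapp, oneapp, hτ1, map_div₀, map_mul, map_mul, hf1,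
          hτ2 i (i-1) (nim i), hτ2 i (i+1) (nip i), hτ1]
        have hne : f i * τ (i-1) * τ (i+1) ≠ 0 :=
          mul_ne_zero (mul_ne_zero (hf i) (hτ (i-1))) (hτ (i+1))
        rw [div_div_eq_mul_div, mul_comm, mul_div_assoc, div_self hne, mul_one]
      · rw [mulapp, oneapp, hτ2 i k hki, hτ2 i k hki]
  -- Part 3: commutation
  have comm : ∀ i j, j ≠ i + 1 → j ≠ i - 1 → s i * s j = s j * s i := by
    intro i j hjp hjm
    rcases eq_or_ne j i with rfl | hji
    · rfl
    have hij : i ≠ j := hji.symm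
    have hijp : i ≠ j + 1 := fun h => hjm (by rw [h, add_sub_cancel_right])
    have hijm : i ≠ j - 1 := fun h => hjp (by rw [h, sub_add_cancel])
    have sJαi : s j (α i) = α i := hα4 j i hij hijp hijm
    have sJfi : s j (f i) = f i := hf4 j i hij hijp hijm
    have sIαj : s i (α j) = α j := hα4 i j hji hjp hjm
    have sIfj : s i (f j) = f j := hf4 i j hji hjp hjm
    apply ext
    · intro k
      rcases eq_or_ne k i with h | hki
      · rw [h, mulapp, mulapp, sJαi, hα1, map_neg, sJαi]
      rcases eq_or_ne k j with h | hkj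
      · rw [h, mulapp, mulapp, sIαj, hα1, map_neg, sIαj]
      have Hi : ∃ c, s i (α k) = α k + c ∧ s j c = c := by
        rcases eq_or_ne k (i+1) with h | hp
        · exact ⟨α i, by rw [h]; exact hα2 i, sJαi⟩
        rcases eq_or_ne k (i-1) with h | hm
        · exact ⟨α i, by rw [h]; exact hα3 i, sJαi⟩
        · exact ⟨0, by rw [hα4 i k hki hp hm, add_zero], map_zero _⟩
      have Hj : ∃ d, s j (α k) = α k + d ∧ s i d = d := by
        rcases eq_or_ne k (j+1) with h | hp
        · exact ⟨α j, by rw [h]; exact hα2 j, sIαj⟩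
        rcases eq_or_ne k (j-1) with h | hm
        · exact ⟨α j, by rw [h]; exact hα3 j, sIαj⟩
        · exact ⟨0, by rw [hα4 j k hkj hp hm, add_zero], map_zero _⟩
      obtain ⟨c, hc, hcJ⟩ := Hi
      obtain ⟨d, hd, hdI⟩ := Hj
      have L : s i (s j (α k)) = (α k + c) + d := by rw [hd, map_add, hc, hdI]
      have R : s j (s i (α k)) = (α k + d) + c := by rw [hc, map_add, hd, hcJ]
      rw [mulapp, mulapp, L, R]; ring
    · intro k
      rcases eq_or_ne k i with h | hki
      · rw [h, mulapp, mulapp, sJfi, hf1, sJfi]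
      rcases eq_or_ne k j with h | hkj
      · rw [h, mulapp, mulapp, sIfj, hf1, sIfj]
      have Hi : ∃ c, s i (f k) = f k + c ∧ s j c = c := by
        rcases eq_or_ne k (i+1) with h | hp
        · exact ⟨α i / f i, by rw [h]; exact hf2 i, by rw [map_div₀, sJαi, sJfi]⟩
        rcases eq_or_ne k (i-1) with h | hm
        · exact ⟨-(α i / f i), by rw [h, hf3 i]; ring, by rw [map_neg, map_div₀, sJαi, sJfi]⟩
        · exact ⟨0, by rw [hf4 i k hki hp hm, add_zero], map_zero _⟩
      have Hj : ∃ d, s j (f k) = f k + d ∧ s i d = d := by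
        rcases eq_or_ne k (j+1) with h | hp
        · exact ⟨α j / f j, by rw [h]; exact hf2 j, by rw [map_div₀, sIαj, sIfj]⟩
        rcases eq_or_ne k (j-1) with h | hm
        · exact ⟨-(α j / f j), by rw [h, hf3 j]; ring, by rw [map_neg, map_div₀, sIαj, sIfj]⟩
        · exact ⟨0, by rw [hf4 j k hkj hp hm, add_zero], map_zero _⟩
      obtain ⟨c, hc, hcJ⟩ := Hi
      obtain ⟨d, hd, hdI⟩ := Hj
      have L : s i (s j (f k)) = (f k + c) + d := by rw [hd, map_add, hc, hdI]
      have R : s j (s i (f k)) = (f k + d) + c := by rw [hc, map_add, hd, hcJ]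
      rw [mulapp, mulapp, L, R]; ring
    · intro k
      have him : i - 1 ≠ j := fun h => hjm h.symm
      have hipj : i + 1 ≠ j := fun h => hjp h.symm
      have hjmi : j - 1 ≠ i := fun h => hijm h.symm
      have hjpi : j + 1 ≠ i := fun h => hijp h.symm
      rcases eq_or_ne k i with h | hki
      · rw [h, mulapp, mulapp, hτ2 j i hij, hτ1, map_div₀, map_mul, map_mul, sJfi,
          hτ2 j (i-1) him, hτ2 j (i+1) hipj, hτ2 j i hij]
      rcases eq_or_ne k j with h | hkj
      · rw [h, mulapp, mulapp, hτ2 i j hji, hτ1, map_div₀, map_mul, map_mul, sIfj,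
          hτ2 i (j-1) hjmi, hτ2 i (j+1) hjpi, hτ2 i j hji]
      · rw [mulapp, mulapp, hτ2 j k hkj, hτ2 i k hki, hτ2 j k hkj]
  -- Part 2: braid relation
  have braid : ∀ i, s i * s (i+1) * s i = s (i+1) * s i * s (i+1) := by
    intro i
    have e1 : i + 1 - 1 = i := add_sub_cancel_right i 1
    have Aai : s i (α i) = -α i := hα1 i
    have Aap : s i (α (i+1)) = α (i+1) + α i := hα2 i
    have Aam : s i (α (i-1)) = α (i-1) + α i := hα3 i
    have Bap : s (i+1) (α (i+1)) = -α (i+1) := hα1 (i+1)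
    have Bai : s (i+1) (α i) = α i + α (i+1) := by have := hα3 (i+1); rwa [e1] at this
    have Bac : s (i+1) (α (i+1+1)) = α (i+1+1) + α (i+1) := hα2 (i+1)
    have Afi : s i (f i) = f i := hf1 i
    have Afp : s i (f (i+1)) = f (i+1) + α i / f i := hf2 i
    have Afm : s i (f (i-1)) = f (i-1) - α i / f i := hf3 i
    have Bfp : s (i+1) (f (i+1)) = f (i+1) := hf1 (i+1)
    have Bfi : s (i+1) (f i) = f i - α (i+1) / f (i+1) := by have := hf3 (i+1); rwa [e1] at this
    have Bfc : s (i+1) (f (i+1+1)) = f (i+1+1) + α (i+1) / f (i+1) := hf2 (i+1)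
    have Ati : s i (τ i) = f i * τ (i-1) * τ (i+1) / τ i := hτ1 i
    have Atp : s i (τ (i+1)) = τ (i+1) := hτ2 i (i+1) (nip i)
    have Atm : s i (τ (i-1)) = τ (i-1) := hτ2 i (i-1) (nim i)
    have Atc : s i (τ (i+1+1)) = τ (i+1+1) := hτ2 i (i+1+1) (ncc i)
    have Btp : s (i+1) (τ (i+1)) = f (i+1) * τ i * τ (i+1+1) / τ (i+1) := by
      have := hτ1 (i+1); rwa [e1] at this
    have Bti : s (i+1) (τ i) = τ i := hτ2 (i+1) i (fun h => nip i h.symm)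
    have Btm : s (i+1) (τ (i-1)) = τ (i-1) := hτ2 (i+1) (i-1) (nmp i)
    have Btc : s (i+1) (τ (i+1+1)) = τ (i+1+1) := hτ2 (i+1) (i+1+1) (nip (i+1))
    -- the key combinations P and Q, set as opaque atoms
    set P := f i * f (i+1) + α i with hPdef
    set Q := f i * f (i+1) - α (i+1) with hQdef
    have Afp2 : s i (f (i+1)) = P / f i := by
      rw [Afp, hPdef]; field_simp [hf i]
    have Bfi2 : s (i+1) (f i) = Q / f (i+1) := by
      rw [Bfi, hQdef]; field_simp [hf (i+1)]
    have AFP : s i (f i * f (i+1)) = P := by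
      rw [map_mul, Afi, Afp, hPdef]; field_simp [hf i]
    have BFQ : s (i+1) (f i * f (i+1)) = Q := by
      rw [map_mul, Bfi, Bfp, hQdef]; field_simp [hf (i+1)]
    have AP : s i P = f i * f (i+1) := by
      rw [hPdef, map_add, AFP, Aai, hPdef]; ring
    have AQ : s i Q = Q := by
      rw [hQdef, map_sub, AFP, Aap, hPdef]; ring
    have BP : s (i+1) P = P := by
      rw [hPdef, map_add, BFQ, Bai, hQdef]; ring
    have BQ : s (i+1) Q = f i * f (i+1) := by
      rw [hQdef, map_sub, BFQ, Bap, hQdef]; ring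
    have hPne : P ≠ 0 := by
      rw [← AFP]; exact mapne _ (mul_ne_zero (hf i) (hf (i+1)))
    have hQne : Q ≠ 0 := by
      rw [← BFQ]; exact mapne _ (mul_ne_zero (hf i) (hf (i+1)))
    by_cases h3 : (i + 1 + 1 : ZMod N) = i - 1
    · -- N = 3 case
      have hN3 : N = 3 := by
        have h30 : ((3:ℕ) : ZMod N) = 0 := by push_cast; linear_combination h3
        have hd : (N:ℕ) ∣ 3 := (ZMod.natCast_eq_zero_iff 3 N).mp h30
        have := Nat.le_of_dvd (by norm_num) hd; omega
      have hcases : ∀ a k : ZMod N, k = a ∨ k = a + 1 ∨ k = a - 1 := by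
        subst hN3; decide
      have Bam : s (i+1) (α (i-1)) = α (i-1) + α (i+1) := by
        have := hα2 (i+1); rwa [h3] at this
      have Bfm : s (i+1) (f (i-1)) = f (i-1) + α (i+1) / f (i+1) := by
        have := hf2 (i+1); rwa [h3] at this
      have Btp3 : s (i+1) (τ (i+1)) = f (i+1) * τ i * τ (i-1) / τ (i+1) := by
        rwa [h3] at Btp
      apply ext
      · intro k
        rcases hcases i k with h | h | h
        all_goals rw [h]
        all_goals simp only [mulapp, map_add, map_neg, Aai, Aap, Aam, Bai, Bap, Bam]
        all_goals set_option maxHeartbeats 2000000 in ring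
      · intro k
        rcases hcases i k with h | h | h
        all_goals rw [h]
        all_goals simp only [mulapp, map_add, map_sub, map_neg, map_mul, map_div₀,
          Aai, Aap, Aam, Afi, Afp2, Afm, AP, AQ, Bai, Bap, Bam, Bfi2, Bfp, Bfm, BP, BQ]
        all_goals set_option maxHeartbeats 2000000 in field_simp [hf i, hf (i+1), hPne, hQne]
        all_goals simp only [hPdef, hQdef]
        all_goals set_option maxHeartbeats 2000000 in ring
      · have BAti : s (i+1) (s i (τ i)) = Q * τ (i-1) * τ (i-1) / τ (i+1) := by
          rw [Ati, map_div₀, map_mul, map_mul, Bfi2, Btm, Btp3, Bti]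
          field_simp [hf (i+1), hτ i, hτ (i+1)]
        have ABtp : s i (s (i+1) (τ (i+1))) = P * τ (i-1) * τ (i-1) / τ i := by
          rw [Btp3, map_div₀, map_mul, map_mul, Afp2, Ati, Atm, Atp]
          field_simp [hf i, hτ i, hτ (i+1)]
        intro k
        rcases hcases i k with h | h | h
        · rw [h, mulapp, mulapp, mulapp, mulapp, Bti, BAti,
            map_div₀, map_mul, map_mul, AQ, Atm, Atp]
        · rw [h, mulapp, mulapp, mulapp, mulapp, Atp, ABtp,
            map_div₀, map_mul, map_mul, BP, Btm, Bti]
        · rw [h, mulapp, mulapp, mulapp, mulapp, Atm, Btm, Atm, Btm]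
    · -- generic case
      have m_ne_c : i - 1 ≠ i + 1 + 1 := fun h => h3 h.symm
      have Aac : s i (α (i+1+1)) = α (i+1+1) := hα4 i (i+1+1) (ncc i) (nip (i+1)) h3
      have Afc : s i (f (i+1+1)) = f (i+1+1) := hf4 i (i+1+1) (ncc i) (nip (i+1)) h3
      have Bam : s (i+1) (α (i-1)) = α (i-1) := by
        apply hα4 (i+1) (i-1) (nmp i) m_ne_c
        rw [e1]; exact nim i
      have Bfm : s (i+1) (f (i-1)) = f (i-1) := by
        apply hf4 (i+1) (i-1) (nmp i) m_ne_c
        rw [e1]; exact nim i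
      apply ext
      · intro k
        rcases eq_or_ne k i with h | hki
        · rw [h]; simp only [mulapp, map_add, map_neg, Aai, Aap, Bai, Bap]; ring
        rcases eq_or_ne k (i+1) with h | hkp
        · rw [h]; simp only [mulapp, map_add, map_neg, Aai, Aap, Bai, Bap]; ring
        rcases eq_or_ne k (i-1) with h | hkm
        · rw [h]; simp only [mulapp, map_add, map_neg, Aai, Aap, Aam, Bai, Bap, Bam]; ring
        rcases eq_or_ne k (i+1+1) with h | hkc
        · rw [h]; simp only [mulapp, map_add, map_neg, Aai, Aap, Aac, Bai, Bap, Bac]; ring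
        have hA : s i (α k) = α k := hα4 i k hki hkp hkm
        have hB : s (i+1) (α k) = α k := by
          apply hα4 (i+1) k hkp hkc
          rw [e1]; exact hki
        rw [mulapp, mulapp, mulapp, mulapp, hA, hB, hA, hB]
      · intro k
        rcases eq_or_ne k i with h | hki
        · rw [h]
          simp only [mulapp, map_add, map_sub, map_neg, map_mul, map_div₀,
            Aai, Aap, Afi, Afp2, AP, AQ, Bai, Bap, Bfi2, Bfp, BP, BQ]
          set_option maxHeartbeats 2000000 in field_simp [hf i, hf (i+1), hPne, hQne]
        rcases eq_or_ne k (i+1) with h | hkp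
        · rw [h]
          simp only [mulapp, map_add, map_sub, map_neg, map_mul, map_div₀,
            Aai, Aap, Afi, Afp2, AP, AQ, Bai, Bap, Bfi2, Bfp, BP, BQ]
          set_option maxHeartbeats 2000000 in field_simp [hf i, hf (i+1), hPne, hQne]
        rcases eq_or_ne k (i-1) with h | hkm
        · rw [h]
          simp only [mulapp, map_add, map_sub, map_neg, map_mul, map_div₀,
            Aai, Aap, Aam, Afi, Afp2, Afm, AP, AQ, Bai, Bap, Bam, Bfi2, Bfp, Bfm, BP, BQ]
          set_option maxHeartbeats 2000000 in field_simp [hf i, hf (i+1), hPne, hQne]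
          simp only [hPdef, hQdef]; set_option maxHeartbeats 2000000 in ring
        rcases eq_or_ne k (i+1+1) with h | hkc
        · rw [h]
          simp only [mulapp, map_add, map_sub, map_neg, map_mul, map_div₀,
            Aai, Aap, Aac, Afi, Afp2, Afc, AP, AQ, Bai, Bap, Bac, Bfi2, Bfp, Bfc, BP, BQ]
          set_option maxHeartbeats 2000000 in field_simp [hf i, hf (i+1), hPne, hQne]
          simp only [hPdef, hQdef]; set_option maxHeartbeats 2000000 in ring
        have hA : s i (f k) = f k := hf4 i k hki hkp hkm
        have hB : s (i+1) (f k) = f k := by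
          apply hf4 (i+1) k hkp hkc
          rw [e1]; exact hki
        rw [mulapp, mulapp, mulapp, mulapp, hA, hB, hA, hB]
      · have BAti : s (i+1) (s i (τ i)) = Q * τ (i-1) * τ (i+1+1) / τ (i+1) := by
          rw [Ati, map_div₀, map_mul, map_mul, Bfi2, Btm, Btp, Bti]
          field_simp [hf (i+1), hτ i, hτ (i+1)]
        have ABtp : s i (s (i+1) (τ (i+1))) = P * τ (i-1) * τ (i+1+1) / τ i := by
          rw [Btp, map_div₀, map_mul, map_mul, Afp2, Ati, Atc, Atp]
          field_simp [hf i, hτ i, hτ (i+1)]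
        intro k
        rcases eq_or_ne k i with h | hki
        · rw [h, mulapp, mulapp, mulapp, mulapp, Bti, BAti,
            map_div₀, map_mul, map_mul, AQ, Atm, Atc, Atp]
        rcases eq_or_ne k (i+1) with h | hkp
        · rw [h, mulapp, mulapp, mulapp, mulapp, Atp, ABtp,
            map_div₀, map_mul, map_mul, BP, Btm, Btc, Bti]
        have hA : s i (τ k) = τ k := hτ2 i k hki
        have hB : s (i+1) (τ k) = τ k := hτ2 (i+1) k hkp
        rw [mulapp, mulapp, mulapp, mulapp, hA, hB, hA, hB]
  have pow3 : ∀ i, (s i * s (i+1)) ^ 3 = 1 := by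
    intro i
    calc (s i * s (i+1)) ^ 3
        = (s i * s (i+1) * s i) * (s (i+1) * s i * s (i+1)) := by
          rw [pow_succ, pow_succ, pow_one]; simp only [mul_assoc]
      _ = (s (i+1) * s i * s (i+1)) * (s (i+1) * s i * s (i+1)) := by rw [braid i]
      _ = s (i+1) * (s i * ((s (i+1) * s (i+1)) * (s i * s (i+1)))) := by
          simp only [mul_assoc]
      _ = s (i+1) * (s i * (s i * s (i+1))) := by rw [inv (i+1), one_mul]
      _ = s (i+1) * ((s i * s i) * s (i+1)) := by rw [mul_assoc]
      _ = s (i+1) * s (i+1) := by rw [inv i, one_mul]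
      _ = 1 := inv (i+1)
  exact ⟨inv, pow3, comm⟩
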